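/- Under the potential outcomes model with randomized Z and consistency, if pr(D=0, Y=1 | Z=1) + pr(D=0, Y=0 | Z=0) > 1, then ACDE(0) = E[Y(1,0)] − E[Y(0,0)] > 0; that is, violation of the instrumental inequality for (d,y) = (0,1) implies a strictly positive average controlled direct effect of Z on Y at treatment level 0. -/

import Mathlib

open MeasureTheory ProbabilityTheory

/-- Violation of the instrumental inequality for `(d,y) = (0,1)` implies a strictly
positive average controlled direct effect `ACDE(0) > 0`. -/
theorem stmt_6 {Ω : Type*} [MeasurableSpace Ω] (μ : Measure Ω) [IsProbabilityMeasure μ]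
    (Z D Y : Ω → Bool) (Y' : Bool → Bool → Ω → Bool) (D' : Bool → Ω → Bool)
    (hZ : Measurable Z) (hD : Measurable D) (hY : Measurable Y)
    (hY' : ∀ z d, Measurable (Y' z d)) (hD' : ∀ z, Measurable (D' z))
    (hZ0 : μ {ω | Z ω = false} ≠ 0) (hZ1 : μ {ω | Z ω = true} ≠ 0)
    (hindep : IndepFun Z
      (fun ω => ((fun z d => Y' z d ω, fun z => D' z ω) :
        (Bool → Bool → Bool) × (Bool → Bool))) μ)
    (hconsD : ∀ ω, D ω = D' (Z ω) ω)
    (hconsY : ∀ ω, Y ω = Y' (Z ω) (D ω) ω)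
    (hviol : ((μ[|{ω | Z ω = true}]) {ω | D ω = false ∧ Y ω = true}).toReal
      + ((μ[|{ω | Z ω = false}]) {ω | D ω = false ∧ Y ω = false}).toReal > 1) :
    (∫ ω, (if Y' true false ω = true then (1 : ℝ) else 0) ∂μ)
      - (∫ ω, (if Y' false false ω = true then (1 : ℝ) else 0) ∂μ) > 0 := by
  have hZne : ∀ z : Bool, μ {ω | Z ω = z} ≠ 0 := by
    intro z; cases z; exact hZ0; exact hZ1
  -- key: conditional probability equals unconditional prob of potential-outcome event
  have key : ∀ z y : Bool,
      μ[|{ω | Z ω = z}] {ω | D ω = false ∧ Y ω = y}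
        = μ {ω | D' z ω = false ∧ Y' z false ω = y} := by
    intro z y
    have hZm : MeasurableSet {ω | Z ω = z} := hZ (measurableSet_singleton z)
    have hSm : MeasurableSet {p : (Bool → Bool → Bool) × (Bool → Bool) |
        p.2 z = false ∧ p.1 z false = y} := by
      have h1 : Measurable (fun p : (Bool → Bool → Bool) × (Bool → Bool) => p.2 z) :=
        (measurable_pi_apply z).comp measurable_snd
      have h2 : Measurable (fun p : (Bool → Bool → Bool) × (Bool → Bool) => p.1 z false) :=
        (measurable_pi_apply false).comp ((measurable_pi_apply z).comp measurable_fst)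
      exact (h1 (measurableSet_singleton false)).inter (h2 (measurableSet_singleton y))
    have hind := hindep.measure_inter_preimage_eq_mul (s := {z})
      (t := {p : (Bool → Bool → Bool) × (Bool → Bool) | p.2 z = false ∧ p.1 z false = y})
      (measurableSet_singleton z) hSm
    have hpre1 : Z ⁻¹' {z} = {ω | Z ω = z} := rfl
    have hpre2 : (fun ω => ((fun z d => Y' z d ω, fun z => D' z ω) :
        (Bool → Bool → Bool) × (Bool → Bool))) ⁻¹'
        {p | p.2 z = false ∧ p.1 z false = y}
        = {ω | D' z ω = false ∧ Y' z false ω = y} := rfl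
    rw [hpre1, hpre2] at hind
    have hset : {ω | Z ω = z} ∩ {ω | D ω = false ∧ Y ω = y}
        = {ω | Z ω = z} ∩ {ω | D' z ω = false ∧ Y' z false ω = y} := by
      ext ω
      simp only [Set.mem_inter_iff, Set.mem_setOf_eq]
      constructor
      · rintro ⟨hz, hd, hy⟩
        have hd' : D' z ω = false := by rw [← hz, ← hconsD]; exact hd
        refine ⟨hz, hd', ?_⟩
        rw [hconsY ω, hz, hd] at hy
        exact hy
      · rintro ⟨hz, hd', hy'⟩
        have hd : D ω = false := by rw [hconsD, hz]; exact hd'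
        refine ⟨hz, hd, ?_⟩
        rw [hconsY ω, hz, hd]
        exact hy'
    rw [cond_apply hZm, hset, hind, ← mul_assoc,
      ENNReal.inv_mul_cancel (hZne z) (measure_ne_top μ _), one_mul]
  -- integrals as measures
  have hint : ∀ z : Bool, (∫ ω, (if Y' z false ω = true then (1 : ℝ) else 0) ∂μ)
      = (μ {ω | Y' z false ω = true}).toReal := by
    intro z
    have hm : MeasurableSet {ω | Y' z false ω = true} :=
      hY' z false (measurableSet_singleton true)
    rw [← Measure.real_def, ← integral_indicator_one hm]
    congr 1
    ext ω
    simp [Set.indicator_apply, Set.mem_setOf_eq]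
  rw [key, key] at hviol
  rw [hint, hint]
  set a1 := μ {ω | D' true ω = false ∧ Y' true false ω = true} with ha1
  set a0 := μ {ω | D' false ω = false ∧ Y' false false ω = false} with ha0
  have hsub1 : (a1).toReal ≤ (μ {ω | Y' true false ω = true}).toReal := by
    apply ENNReal.toReal_mono (measure_ne_top μ _)
    exact measure_mono fun ω h => h.2
  have hsub0 : (a0).toReal ≤ (μ {ω | Y' false false ω = false}).toReal := by
    apply ENNReal.toReal_mono (measure_ne_top μ _)
    exact measure_mono fun ω h => h.2
  have hcompl : (μ {ω | Y' false false ω = true}).toReal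
      = 1 - (μ {ω | Y' false false ω = false}).toReal := by
    have hm : MeasurableSet {ω | Y' false false ω = false} :=
      hY' false false (measurableSet_singleton false)
    have hc : {ω | Y' false false ω = false}ᶜ = {ω | Y' false false ω = true} := by
      ext ω; simp
    rw [← hc, prob_compl_eq_one_sub hm,
      ENNReal.toReal_sub_of_le prob_le_one ENNReal.one_ne_top, ENNReal.toReal_one]
  rw [hcompl]
  linarith
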